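/- Let p, q ≥ 1, P_Θ = Σ_{i=1}^q I_p⊗e_{q,i}⊗I_p⊗e_{q,i}, P_Ψ = Σ_{j=1}^p e_{p,j}⊗I_q⊗e_{p,j}⊗I_q, and P = [P_Θ P_Ψ]. Then P_Θ^T P_Θ = q·I_{p²}, P_Ψ^T P_Ψ = p·I_{q²}, and P_Θ^T P_Ψ = vec(I_p)·vec(I_q)^T. Moreover the characteristic polynomial of the (p²+q²)×(p²+q²) matrix P^T P is det(P^T P − λ·I) = (p−λ)^{q²−1} (q−λ)^{p²−1} λ (λ−(p+q)); in particular the eigenvalues of P^T P are 0, p, q, and p+q with algebraic multiplicities 1, q²−1, p²−1, and 1, respectively. -/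

import Mathlib

open Matrix
open scoped Kronecker

namespace EiGLasso

/-- The Kronecker sum `Θ ⊕ Ψ = Θ ⊗ I_q + I_p ⊗ Ψ`. -/
def kronSum {p q : ℕ} (A : Matrix (Fin p) (Fin p) ℝ) (B : Matrix (Fin q) (Fin q) ℝ) :
    Matrix (Fin p × Fin q) (Fin p × Fin q) ℝ :=
  A ⊗ₖ (1 : Matrix (Fin q) (Fin q) ℝ) + (1 : Matrix (Fin p) (Fin p) ℝ) ⊗ₖ B

/-- The `pq × p` selection matrix `I_p ⊗ e_{q,i}`, where `e_{q,i}` is the `i`-th one-hot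
vector in `ℝ^q`.  Row `(j', i')` (i.e. row `(j'-1)q + i'`), column `j`. -/
def selTheta (p q : ℕ) (i : Fin q) : Matrix (Fin p × Fin q) (Fin p) ℝ :=
  Matrix.of fun x j => if x = (j, i) then (1 : ℝ) else 0

/-- The `pq × q` selection matrix `e_{p,j} ⊗ I_q`. -/
def selPsi (p q : ℕ) (j : Fin p) : Matrix (Fin p × Fin q) (Fin q) ℝ :=
  Matrix.of fun x i => if x = (j, i) then (1 : ℝ) else 0

/-- `P_Θ = ∑_{i=1}^q I_p ⊗ e_{q,i} ⊗ I_p ⊗ e_{q,i}`, a `p²q² × p²` matrix. -/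
def Ptheta (p q : ℕ) : Matrix ((Fin p × Fin q) × (Fin p × Fin q)) (Fin p × Fin p) ℝ :=
  ∑ i : Fin q, (selTheta p q i) ⊗ₖ (selTheta p q i)

/-- `P_Ψ = ∑_{j=1}^p e_{p,j} ⊗ I_q ⊗ e_{p,j} ⊗ I_q`, a `p²q² × q²` matrix. -/
def Ppsi (p q : ℕ) : Matrix ((Fin p × Fin q) × (Fin p × Fin q)) (Fin q × Fin q) ℝ :=
  ∑ j : Fin p, (selPsi p q j) ⊗ₖ (selPsi p q j)

/-- Column-stacking vectorization: `vec(A)` at index `(j, i)` (i.e. `(j-1)m + i`) is `A i j`. -/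
def vec {m n : Type*} (A : Matrix m n ℝ) : n × m → ℝ := fun x => A x.2 x.1

lemma Ptheta_apply (p q : ℕ) (x : (Fin p × Fin q) × (Fin p × Fin q)) (j : Fin p × Fin p) :
    Ptheta p q x j = if x.1.1 = j.1 ∧ x.2.1 = j.2 ∧ x.1.2 = x.2.2 then 1 else 0 := by
  obtain ⟨⟨a,b⟩,⟨c,d⟩⟩ := x
  obtain ⟨j1,j2⟩ := j
  simp only [Ptheta, Matrix.sum_apply, kroneckerMap_apply, selTheta, of_apply]
  rw [Finset.sum_eq_single b (fun i _ hi => by simp [Prod.ext_iff, hi.symm]) (by simp)]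
  simp [Prod.ext_iff, ite_and, eq_comm (a := b)]
  aesop

lemma Ppsi_apply (p q : ℕ) (x : (Fin p × Fin q) × (Fin p × Fin q)) (i : Fin q × Fin q) :
    Ppsi p q x i = if x.1.2 = i.1 ∧ x.2.2 = i.2 ∧ x.1.1 = x.2.1 then 1 else 0 := by
  obtain ⟨⟨a,b⟩,⟨c,d⟩⟩ := x
  obtain ⟨i1,i2⟩ := i
  simp only [Ppsi, Matrix.sum_apply, kroneckerMap_apply, selPsi, of_apply]
  rw [Finset.sum_eq_single a (fun j _ hj => by simp [Prod.ext_iff, hj.symm]) (by simp)]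
  simp [Prod.ext_iff, ite_and, eq_comm (a := a)]
  aesop

lemma PtP_theta (p q : ℕ) :
    (Ptheta p q)ᵀ * Ptheta p q = (q : ℝ) • (1 : Matrix (Fin p × Fin p) (Fin p × Fin p) ℝ) := by
  ext ⟨j1,j2⟩ ⟨k1,k2⟩
  simp [mul_apply, Ptheta_apply, Fintype.sum_prod_type, ite_and, one_apply,
    Finset.sum_ite_eq, Finset.sum_ite_eq', apply_ite]
  split_ifs <;> simp_all

lemma PtP_psi (p q : ℕ) :
    (Ppsi p q)ᵀ * Ppsi p q = (p : ℝ) • (1 : Matrix (Fin q × Fin q) (Fin q × Fin q) ℝ) := by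
  ext ⟨i1,i2⟩ ⟨k1,k2⟩
  simp [mul_apply, Ppsi_apply, Fintype.sum_prod_type, ite_and, one_apply,
    Finset.sum_ite_eq, Finset.sum_ite_eq', apply_ite]
  split_ifs <;> simp_all

lemma Pt_cross (p q : ℕ) :
    (Ptheta p q)ᵀ * Ppsi p q
      = vecMulVec (vec (1 : Matrix (Fin p) (Fin p) ℝ)) (vec (1 : Matrix (Fin q) (Fin q) ℝ)) := by
  ext ⟨j1,j2⟩ ⟨i1,i2⟩
  simp [mul_apply, Ptheta_apply, Ppsi_apply, Fintype.sum_prod_type, ite_and, one_apply,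
    Finset.sum_ite_eq, Finset.sum_ite_eq', apply_ite, vecMulVec, vec]
  split_ifs <;> (try simp_all) <;> omega

lemma vec_one_dot (n : ℕ) :
    vec (1 : Matrix (Fin n) (Fin n) ℝ) ⬝ᵥ vec (1 : Matrix (Fin n) (Fin n) ℝ) = n := by
  simp [vec, dotProduct, Fintype.sum_prod_type, one_apply, ite_and, Finset.sum_ite_eq]

lemma vmv_mul {m n k : Type*} [Fintype n] (a : m → ℝ) (b c : n → ℝ) (d : k → ℝ) :
    vecMulVec a b * vecMulVec c d = (b ⬝ᵥ c) • vecMulVec a d := by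
  ext i j
  simp only [mul_apply, vecMulVec, of_apply, Matrix.smul_apply, dotProduct, smul_eq_mul, Finset.sum_mul]
  exact Finset.sum_congr rfl fun x _ => by ring

lemma det_shift (α c : ℝ) (hα : α ≠ 0) {n : Type*} [Fintype n] [DecidableEq n] (v : n → ℝ) :
    (α • (1 : Matrix n n ℝ) - c • vecMulVec v v).det
      = α ^ Fintype.card n * (1 + (-c/α) * (v ⬝ᵥ v)) := by
  have h : α • (1 : Matrix n n ℝ) - c • vecMulVec v v
      = α • (1 + replicateCol Unit ((-c/α) • v) * replicateRow Unit v) := by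
    rw [← vecMulVec_eq Unit]
    ext i j
    simp only [Matrix.sub_apply, Matrix.smul_apply, one_apply, vecMulVec, of_apply, Matrix.add_apply, smul_eq_mul,
      Pi.smul_apply]
    field_simp
    ring
  rw [h, det_smul, det_one_add_replicateCol_mul_replicateRow]
  congr 1
  rw [dotProduct_comm]
  simp [dotProduct, Finset.mul_sum]
  exact Finset.sum_congr rfl fun x _ => by ring

/-- `P_Θᵀ P_Θ = q I_{p²}`, `P_Ψᵀ P_Ψ = p I_{q²}`,
`P_Θᵀ P_Ψ = vec(I_p) vec(I_q)ᵀ`, and the characteristic polynomial of `Pᵀ P` for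
`P = [P_Θ P_Ψ]` is `det(PᵀP − λI) = (p−λ)^{q²−1} (q−λ)^{p²−1} λ (λ−(p+q))`;
in particular the eigenvalues of `PᵀP` are `0, p, q, p+q` with algebraic multiplicities
`1, q²−1, p²−1, 1`. -/
theorem PtP_structure (p q : ℕ) (hp : 1 ≤ p) (hq : 1 ≤ q) :
    (Ptheta p q)ᵀ * Ptheta p q = (q : ℝ) • (1 : Matrix (Fin p × Fin p) (Fin p × Fin p) ℝ) ∧
    (Ppsi p q)ᵀ * Ppsi p q = (p : ℝ) • (1 : Matrix (Fin q × Fin q) (Fin q × Fin q) ℝ) ∧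
    (Ptheta p q)ᵀ * Ppsi p q
      = vecMulVec (vec (1 : Matrix (Fin p) (Fin p) ℝ)) (vec (1 : Matrix (Fin q) (Fin q) ℝ)) ∧
    ∀ lam : ℝ,
      ((fromCols (Ptheta p q) (Ppsi p q))ᵀ * fromCols (Ptheta p q) (Ppsi p q)
          - lam • 1).det
        = ((p : ℝ) - lam) ^ (q ^ 2 - 1) * ((q : ℝ) - lam) ^ (p ^ 2 - 1)
            * lam * (lam - ((p : ℝ) + (q : ℝ))) := by
  refine ⟨PtP_theta p q, PtP_psi p q, Pt_cross p q, ?_⟩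
  set u := vec (1 : Matrix (Fin p) (Fin p) ℝ) with hu
  set v := vec (1 : Matrix (Fin q) (Fin q) ℝ) with hv
  have hcross' : (Ppsi p q)ᵀ * Ptheta p q = vecMulVec v u := by
    have h := congrArg Matrix.transpose (Pt_cross p q)
    rw [transpose_mul, transpose_transpose] at h
    rw [h]
    ext i j
    simp [vecMulVec, transpose_apply, mul_comm]
    rfl
  have hM : (fromCols (Ptheta p q) (Ppsi p q))ᵀ * fromCols (Ptheta p q) (Ppsi p q)
      = fromBlocks ((q : ℝ) • 1) (vecMulVec u v) (vecMulVec v u) ((p : ℝ) • 1) := by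
    rw [transpose_fromCols, fromRows_mul_fromCols, PtP_theta, PtP_psi, Pt_cross, hcross']
  -- the main computation away from the bad points
  have main : ∀ lam : ℝ, lam ≠ (p : ℝ) → lam ≠ (q : ℝ) →
      ((fromCols (Ptheta p q) (Ppsi p q))ᵀ * fromCols (Ptheta p q) (Ppsi p q)
          - lam • 1).det
        = ((p : ℝ) - lam) ^ (q ^ 2 - 1) * ((q : ℝ) - lam) ^ (p ^ 2 - 1)
            * lam * (lam - ((p : ℝ) + (q : ℝ))) := by
    intro lam hlp hlq
    have h1 : ((q : ℝ) - lam) ≠ 0 := sub_ne_zero.mpr fun h => hlq h.symm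
    have h2 : ((p : ℝ) - lam) ≠ 0 := sub_ne_zero.mpr fun h => hlp h.symm
    rw [hM]
    have hblock : fromBlocks ((q : ℝ) • 1) (vecMulVec u v) (vecMulVec v u) ((p : ℝ) • 1)
        - lam • (1 : Matrix ((Fin p × Fin p) ⊕ (Fin q × Fin q)) _ ℝ)
        = fromBlocks (((q : ℝ) - lam) • 1) (vecMulVec u v) (vecMulVec v u)
            (((p : ℝ) - lam) • 1) := by
      rw [← fromBlocks_one, fromBlocks_smul]
      ext (i | i) (j | j) <;> simp [fromBlocks, sub_smul]
    rw [hblock]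
    letI : Invertible (((q : ℝ) - lam) • (1 : Matrix (Fin p × Fin p) (Fin p × Fin p) ℝ)) :=
      ⟨((q : ℝ) - lam)⁻¹ • 1, by
          rw [smul_mul_smul_comm, one_mul, inv_mul_cancel₀ h1, one_smul], by
          rw [smul_mul_smul_comm, one_mul, mul_inv_cancel₀ h1, one_smul]⟩
    rw [det_fromBlocks₁₁]
    have hinv : ⅟(((q : ℝ) - lam) • (1 : Matrix (Fin p × Fin p) (Fin p × Fin p) ℝ))
        = ((q : ℝ) - lam)⁻¹ • 1 := rfl
    rw [hinv]
    have hschur : ((p : ℝ) - lam) • (1 : Matrix (Fin q × Fin q) (Fin q × Fin q) ℝ)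
          - vecMulVec v u * (((q : ℝ) - lam)⁻¹ • (1 : Matrix (Fin p × Fin p) (Fin p × Fin p) ℝ)) * vecMulVec u v
        = ((p : ℝ) - lam) • (1 : Matrix (Fin q × Fin q) (Fin q × Fin q) ℝ)
          - (((q : ℝ) - lam)⁻¹ * (p : ℝ)) • vecMulVec v v := by
      rw [Matrix.mul_smul, Matrix.mul_one, Matrix.smul_mul, vmv_mul, hu, vec_one_dot,
        smul_smul]
    rw [hschur, det_shift _ _ h2, det_smul, det_one, mul_one, hv, vec_one_dot]
    have cardp : Fintype.card (Fin p × Fin p) = p ^ 2 := by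
      simp [Fintype.card_prod, sq]
    have cardq : Fintype.card (Fin q × Fin q) = q ^ 2 := by
      simp [Fintype.card_prod, sq]
    rw [cardp, cardq]
    have ep : p ^ 2 = (p ^ 2 - 1) + 1 := (Nat.succ_pred_eq_of_pos (by positivity)).symm
    have eq' : q ^ 2 = (q ^ 2 - 1) + 1 := (Nat.succ_pred_eq_of_pos (by positivity)).symm
    rw [ep, eq', pow_succ, pow_succ]
    field_simp
    simp only [Nat.add_sub_cancel]
    ring
  -- continuity + density to cover the remaining points
  have cont1 : Continuous fun lam : ℝ =>
      ((fromCols (Ptheta p q) (Ppsi p q))ᵀ * fromCols (Ptheta p q) (Ppsi p q)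
          - lam • 1).det := by
    apply Continuous.matrix_det
    exact continuous_const.sub (continuous_id.smul continuous_const)
  have cont2 : Continuous fun lam : ℝ =>
      ((p : ℝ) - lam) ^ (q ^ 2 - 1) * ((q : ℝ) - lam) ^ (p ^ 2 - 1)
        * lam * (lam - ((p : ℝ) + (q : ℝ))) := by
    continuity
  have hdense : Dense (({(p : ℝ), (q : ℝ)} : Set ℝ)ᶜ) :=
    ((Set.countable_singleton ((q : ℝ))).insert ((p : ℝ))).dense_compl ℝ
  have := cont1.ext_on hdense cont2 (fun x hx => by
    simp only [Set.mem_compl_iff, Set.mem_insert_iff, Set.mem_singleton_iff, not_or] at hx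
    exact main x hx.1 hx.2)
  exact fun lam => congrFun this lam

end EiGLasso
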